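/- Let -1 < λ ≤ 0, set θ = -λ + |1+λ|/2 ∈ (0,1), and let Θ = (1, θ, θ², …) ∈ ℓ². Then for A = λ·id + E one has ‖e^{tA} Θ‖₂ = e^{t|1+λ|/2} ‖Θ‖₂ for all t ∈ ℝ, so ‖e^{tA} Θ‖₂ → +∞ as t → +∞. In particular, for λ > -1 the system ẏ = Ay on ℓ² is not asymptotically stable. -/

import Mathlib

open scoped ENNReal
open MeasureTheory Filter

noncomputable section

/-- The real Hilbert space `ℓ²` of square-summable real sequences. -/
abbrev ell2 : Type := lp (fun _ : ℕ => ℝ) 2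

lemma shift_memℓp (y : ell2) : Memℓp (fun n => y (n + 1)) 2 := by
  have h : Summable fun n : ℕ => ‖y n‖ ^ (2 : ℝ≥0∞).toReal :=
    (memℓp_gen_iff (by norm_num)).mp (lp.memℓp y)
  exact memℓp_gen (h.comp_injective (add_left_injective 1))

/-- The left shift operator `E : ℓ² → ℓ²`, `(Ey)ₙ = yₙ₊₁`. -/
def shiftE : ell2 →L[ℝ] ell2 :=
  LinearMap.mkContinuous
    { toFun := fun y => ⟨fun n => y (n + 1), shift_memℓp y⟩
      map_add' := fun y z => by
        ext n
        simp [lp.coeFn_add]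
        rfl
      map_smul' := fun c y => by
        ext n
        simp [lp.coeFn_smul] }
    1
    (fun y => by
      rw [one_mul]
      have h2 : (0:ℝ) < (2 : ℝ≥0∞).toReal := by norm_num
      have hy := lp.norm_rpow_eq_tsum h2 y
      have hEy := lp.norm_rpow_eq_tsum h2 (⟨fun n => y (n + 1), shift_memℓp y⟩ : ell2)
      have hle : (∑' n : ℕ, ‖y (n + 1)‖ ^ (2 : ℝ≥0∞).toReal)
          ≤ ∑' n : ℕ, ‖y n‖ ^ (2 : ℝ≥0∞).toReal := by
        have hs : Summable fun n : ℕ => ‖y n‖ ^ (2 : ℝ≥0∞).toReal :=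
          (memℓp_gen_iff h2).mp (lp.memℓp y)
        exact tsum_comp_le_tsum_of_inj hs (fun n => by positivity)
          (add_left_injective 1)
      have key : ‖(⟨fun n => y (n + 1), shift_memℓp y⟩ : ell2)‖ ^ (2 : ℝ≥0∞).toReal
          ≤ ‖y‖ ^ (2 : ℝ≥0∞).toReal := by
        rw [hy, hEy]; exact hle
      exact (Real.rpow_le_rpow_iff
        (norm_nonneg ((⟨fun n => y (n + 1), shift_memℓp y⟩ : ell2))) (norm_nonneg y) h2).mp key)

/-- The operator `A = λ·id + E` on `ℓ²`. -/
def opA (lam : ℝ) : ell2 →L[ℝ] ell2 :=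
  lam • ContinuousLinearMap.id ℝ ell2 + shiftE


open Nat in
lemma shiftE_apply (y : ell2) (n : ℕ) : shiftE y n = y (n + 1) := rfl

open Nat in
lemma exp_apply_eigen (B : ell2 →L[ℝ] ell2) (v : ell2) (c : ℝ) (h : B v = c • v) :
    NormedSpace.exp B v = Real.exp c • v := by
  have hpow : ∀ n : ℕ, (B ^ n) v = c ^ n • v := by
    intro n
    induction n with
    | zero => simp
    | succ n ih =>
      rw [pow_succ, ContinuousLinearMap.mul_apply, h, _root_.map_smul, ih, smul_smul, pow_succ]
      ring_nf
  have hs : Summable fun n : ℕ => ((n ! : ℝ))⁻¹ • B ^ n :=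
    NormedSpace.expSeries_summable' B
  have hmap := hs.hasSum.mapL (ContinuousLinearMap.apply ℝ ell2 v)
  simp only [ContinuousLinearMap.apply_apply, ContinuousLinearMap.smul_apply, hpow] at hmap
  rw [NormedSpace.exp_eq_tsum ℝ]
  have : ContinuousLinearMap.apply ℝ ell2 v (∑' n : ℕ, ((n ! : ℝ))⁻¹ • B ^ n)
      = ∑' n : ℕ, ((n ! : ℝ))⁻¹ • (c ^ n • v) := by
    exact ((ContinuousLinearMap.apply ℝ ell2 v).map_tsum hs).trans (by
      simp [hpow])
  simp only [ContinuousLinearMap.apply_apply] at this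
  rw [this]
  have hsum : Summable fun n : ℕ => (n ! : ℝ)⁻¹ * c ^ n := by
    have := Real.summable_pow_div_factorial c
    refine this.congr fun n => ?_
    rw [div_eq_inv_mul]
  calc (∑' n : ℕ, ((n ! : ℝ))⁻¹ • (c ^ n • v))
      = ∑' n : ℕ, ((n ! : ℝ)⁻¹ * c ^ n) • v := by
        refine tsum_congr fun n => ?_; rw [smul_smul]
    _ = (∑' n : ℕ, (n ! : ℝ)⁻¹ * c ^ n) • v := by
        rw [hsum.tsum_smul_const]
    _ = Real.exp c • v := by
        congr 1
        rw [Real.exp_eq_exp_ℝ, NormedSpace.exp_eq_tsum ℝ]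
        simp [smul_eq_mul]
/-- For `-1 < λ ≤ 0`, with `θ = -λ + |1+λ|/2 ∈ (0,1)` and `Θ = (1, θ, θ², …) ∈ ℓ²`,
one has `‖e^{tA} Θ‖₂ = e^{t|1+λ|/2} ‖Θ‖₂` for all `t`, so `‖e^{tA} Θ‖₂ → +∞` as
`t → +∞`; in particular for `λ > -1` the system `ẏ = Ay` is not asymptotically stable. -/
theorem stmt7 (lam : ℝ) (h1 : -1 < lam) (h2 : lam ≤ 0) :
    (-lam + |1 + lam| / 2) ∈ Set.Ioo (0:ℝ) 1 ∧
    (∃ Θ : ell2, (∀ n : ℕ, Θ n = (-lam + |1 + lam| / 2) ^ n) ∧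
      (∀ t : ℝ, ‖NormedSpace.exp (t • opA lam) Θ‖ =
        Real.exp (t * (|1 + lam| / 2)) * ‖Θ‖) ∧
      Tendsto (fun t : ℝ => ‖NormedSpace.exp (t • opA lam) Θ‖) atTop atTop) ∧
    ¬ (∀ y0 : ell2, Tendsto (fun t : ℝ => NormedSpace.exp (t • opA lam) y0)
        atTop (nhds 0)) := by
  have habs : |1 + lam| = 1 + lam := abs_of_pos (by linarith)
  set θ : ℝ := -lam + |1 + lam| / 2 with hθdef
  have hθ : θ = (1 - lam) / 2 := by rw [hθdef, habs]; ring
  have hθ0 : 0 < θ := by rw [hθ]; linarith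
  have hθ1 : θ < 1 := by rw [hθ]; linarith
  -- Θ ∈ ℓ²
  have hmem : Memℓp (fun n : ℕ => θ ^ n) 2 := by
    apply memℓp_gen
    have hsum : Summable fun n : ℕ => (θ ^ 2) ^ n :=
      summable_geometric_of_lt_one (by positivity) (by nlinarith)
    refine hsum.congr fun n => ?_
    have h2' : (2 : ℝ≥0∞).toReal = 2 := by norm_num
    rw [h2', Real.rpow_two, Real.norm_eq_abs, sq_abs, ← pow_mul, ← pow_mul, mul_comm]
  set Θ : ell2 := ⟨fun n : ℕ => θ ^ n, hmem⟩ with hΘdef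
  have hΘcoe : ∀ n : ℕ, Θ n = θ ^ n := fun n => rfl
  have hΘne : Θ ≠ 0 := by
    intro hc
    have h0 : Θ 0 = 0 := by rw [hc]; exact lp.coeFn_zero (E := fun _ : ℕ => ℝ) (p := 2) ▸ rfl
    rw [hΘcoe 0, pow_zero] at h0
    norm_num at h0
  have hΘpos : 0 < ‖Θ‖ := norm_pos_iff.mpr hΘne
  set μ : ℝ := |1 + lam| / 2 with hμdef
  have hμ : μ = lam + θ := by rw [hμdef, hθdef]; ring
  have hμpos : 0 < μ := by rw [hμdef, habs]; linarith
  -- eigenvector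
  have heig : opA lam Θ = (lam + θ) • Θ := by
    ext n
    have := shiftE_apply Θ n
    simp only [opA, ContinuousLinearMap.add_apply, ContinuousLinearMap.smul_apply,
      ContinuousLinearMap.id_apply, lp.coeFn_add, lp.coeFn_smul, Pi.add_apply,
      Pi.smul_apply, smul_eq_mul]
    rw [this]
    show lam * θ ^ n + θ ^ (n + 1) = (lam + θ) * θ ^ n
    rw [pow_succ]; ring
  have hnorm : ∀ t : ℝ, ‖NormedSpace.exp (t • opA lam) Θ‖ = Real.exp (t * μ) * ‖Θ‖ := by
    intro t
    have : (t • opA lam) Θ = (t * μ) • Θ := by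
      rw [ContinuousLinearMap.smul_apply, heig, smul_smul, hμ]
    rw [exp_apply_eigen _ _ _ this, norm_smul, Real.norm_eq_abs, Real.abs_exp]
  have htend : Tendsto (fun t : ℝ => ‖NormedSpace.exp (t • opA lam) Θ‖) atTop atTop := by
    have h1' : Tendsto (fun t : ℝ => Real.exp (t * μ) * ‖Θ‖) atTop atTop :=
      (Real.tendsto_exp_atTop.comp (tendsto_id.atTop_mul_const hμpos)).atTop_mul_const hΘpos
    exact h1'.congr fun t => (hnorm t).symm
  refine ⟨⟨hθ0, hθ1⟩, ⟨Θ, hΘcoe, hnorm, htend⟩, ?_⟩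
  intro H
  have h0 : Tendsto (fun t : ℝ => ‖NormedSpace.exp (t • opA lam) Θ‖) atTop (nhds 0) := by
    simpa using (H Θ).norm
  exact not_tendsto_nhds_of_tendsto_atTop htend 0 h0

end
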